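/- Let n ≥ 1 and let K ⊆ ℝ^{n+1} be a convex cone (containing 0) in Minkowski space E^{n+1}_1 such that every nonzero element of K is spacelike. Then there exist a nonzero vector w ∈ F ∩ K* and a nonzero vector w′ ∈ P ∩ K*. -/

import Mathlib

open Set Pointwise

/-- The Minkowski bilinear form on `ℝ^(n+1)`:
`⟪x,y⟫ = x₁y₁ + ⋯ + xₙyₙ − x_{n+1}y_{n+1}`. -/
def mink {n : ℕ} (x y : EuclideanSpace ℝ (Fin (n + 1))) : ℝ :=
  (∑ i : Fin n, x i.castSucc * y i.castSucc) - x (Fin.last n) * y (Fin.last n)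

/-- The closed future cone in Minkowski space. -/
def futureCone (n : ℕ) : Set (EuclideanSpace ℝ (Fin (n + 1))) :=
  {v | mink v v ≤ 0 ∧ 0 ≤ v (Fin.last n)}

/-- The closed past cone in Minkowski space: `P = -F`. -/
def pastCone (n : ℕ) : Set (EuclideanSpace ℝ (Fin (n + 1))) :=
  -futureCone n

/-- The dual cone of a set with respect to the Minkowski form. -/
def minkDual {n : ℕ} (K : Set (EuclideanSpace ℝ (Fin (n + 1)))) :
    Set (EuclideanSpace ℝ (Fin (n + 1))) :=
  {xs | ∀ x ∈ K, 0 ≤ mink xs x}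

/-! ### Auxiliary lemmas -/

lemma mink_neg_of_timelike' {n : ℕ} {a b : EuclideanSpace ℝ (Fin (n+1))}
    (ha : mink a a < 0) (ha' : 0 < a (Fin.last n))
    (hb : mink b b < 0) (hb' : 0 < b (Fin.last n)) : mink a b < 0 := by
  have hcs := Finset.sum_mul_sq_le_sq_mul_sq Finset.univ
    (fun i : Fin n => a i.castSucc) (fun i : Fin n => b i.castSucc)
  have hsq : ∀ v : EuclideanSpace ℝ (Fin (n+1)),
      ∑ i : Fin n, v i.castSucc ^ 2 = ∑ i : Fin n, v i.castSucc * v i.castSucc := by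
    intro v; exact Finset.sum_congr rfl fun i _ => by ring
  have ha2 : ∑ i : Fin n, a i.castSucc ^ 2 < a (Fin.last n) ^ 2 := by
    have h := ha; unfold mink at h; rw [hsq a]; nlinarith [h]
  have hb2 : ∑ i : Fin n, b i.castSucc ^ 2 < b (Fin.last n) ^ 2 := by
    have h := hb; unfold mink at h; rw [hsq b]; nlinarith [h]
  have hsa : (0:ℝ) ≤ ∑ i : Fin n, a i.castSucc ^ 2 :=
    Finset.sum_nonneg fun i _ => sq_nonneg _
  have hsb : (0:ℝ) ≤ ∑ i : Fin n, b i.castSucc ^ 2 :=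
    Finset.sum_nonneg fun i _ => sq_nonneg _
  have hprod : (∑ i : Fin n, a i.castSucc ^ 2) * (∑ i : Fin n, b i.castSucc ^ 2)
      < a (Fin.last n) ^ 2 * b (Fin.last n) ^ 2 :=
    mul_lt_mul' ha2.le hb2 hsb (by positivity)
  have hPpos : 0 < a (Fin.last n) * b (Fin.last n) := mul_pos ha' hb'
  unfold mink
  nlinarith [hcs, hprod, hPpos]

lemma key_separation {n : ℕ} (K : Set (EuclideanSpace ℝ (Fin (n+1))))
    (h0 : (0 : EuclideanSpace ℝ (Fin (n + 1))) ∈ K)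
    (hconv : Convex ℝ K)
    (hcone : ∀ c : ℝ, 0 ≤ c → ∀ x ∈ K, c • x ∈ K)
    (hspace : ∀ x ∈ K, x ≠ 0 → 0 < mink x x) :
    ∃ w, w ≠ 0 ∧ w ∈ futureCone n ∩ minkDual K := by
  classical
  set U : Set (EuclideanSpace ℝ (Fin (n+1))) :=
    {v | mink v v < 0 ∧ 0 < v (Fin.last n)} with hU
  have hUopen : IsOpen U := by
    have h1 : Continuous (fun v : EuclideanSpace ℝ (Fin (n+1)) => mink v v) := by
      unfold mink; fun_prop
    have h2 : Continuous (fun v : EuclideanSpace ℝ (Fin (n+1)) => v (Fin.last n)) := by fun_prop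
    exact (isOpen_lt h1 continuous_const).inter (isOpen_lt continuous_const h2)
  have hUconv : Convex ℝ U := by
    rintro a ⟨ha, ha'⟩ b ⟨hb, hb'⟩ p q hp hq hpq
    have hab := mink_neg_of_timelike' ha ha' hb hb'
    constructor
    · have hterm : ∀ i : Fin n,
        (p * a i.castSucc + q * b i.castSucc) * (p * a i.castSucc + q * b i.castSucc)
        = p^2 * (a i.castSucc * a i.castSucc) + (2*(p*q)) * (a i.castSucc * b i.castSucc)
          + q^2 * (b i.castSucc * b i.castSucc) := fun i => by ring
      have expand : mink (p • a + q • b) (p • a + q • b)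
          = p^2 * mink a a + 2*(p*q) * mink a b + q^2 * mink b b := by
        unfold mink
        simp only [PiLp.add_apply, PiLp.smul_apply, smul_eq_mul]
        rw [Finset.sum_congr rfl fun i _ => hterm i]
        simp only [Finset.sum_add_distrib, ← Finset.mul_sum]
        ring
      show mink _ _ < 0
      rw [expand]
      rcases lt_or_eq_of_le hp with hp' | hp'
      · have t1 : p^2 * mink a a < 0 := mul_neg_of_pos_of_neg (pow_pos hp' 2) ha
        have t2 : 2*(p*q) * mink a b ≤ 0 :=
          mul_nonpos_of_nonneg_of_nonpos (by positivity) hab.le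
        have t3 : q^2 * mink b b ≤ 0 :=
          mul_nonpos_of_nonneg_of_nonpos (sq_nonneg q) hb.le
        linarith
      · have hp0 : p = 0 := hp'.symm
        subst hp0
        have hq1 : q = 1 := by linarith
        subst hq1
        norm_num
        exact hb
    · show 0 < (p • a + q • b) (Fin.last n)
      simp only [PiLp.add_apply, PiLp.smul_apply, smul_eq_mul]
      rcases lt_or_eq_of_le hp with hp' | hp'
      · nlinarith [mul_pos hp' ha', mul_nonneg hq hb'.le]
      · have hp0 : p = 0 := hp'.symm
        subst hp0
        have hq1 : q = 1 := by linarith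
        subst hq1
        norm_num
        exact hb'
  have hdisj : Disjoint U K := by
    rw [Set.disjoint_left]
    rintro a ⟨ha, ha'⟩ haK
    have hane : a ≠ 0 := by
      intro h; rw [h] at ha'; simp at ha'
    exact absurd (hspace a haK hane) (by linarith)
  obtain ⟨f, u, hfU, hfK⟩ := geometric_hahn_banach_open hUconv hUopen hconv hdisj
  have hu0 : u ≤ 0 := by simpa using hfK 0 h0
  have hfK0 : ∀ b ∈ K, 0 ≤ f b := by
    intro b hb
    by_contra hneg
    push_neg at hneg
    have hc : (0:ℝ) < (u - 1) / f b := div_pos_of_neg_of_neg (by linarith) hneg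
    have := hfK _ (hcone _ hc.le b hb)
    rw [map_smul, smul_eq_mul, div_mul_cancel₀ _ (ne_of_lt hneg)] at this
    linarith
  set w : EuclideanSpace ℝ (Fin (n+1)) :=
    WithLp.toLp 2 (fun j => if j = Fin.last n then -(f (EuclideanSpace.single (Fin.last n) (1:ℝ)))
      else f (EuclideanSpace.single j (1:ℝ))) with hw
  have hwapp : ∀ j, w j = if j = Fin.last n then -(f (EuclideanSpace.single (Fin.last n) (1:ℝ)))
      else f (EuclideanSpace.single j (1:ℝ)) := fun j => rfl
  have hwc : ∀ i : Fin n, w i.castSucc = f (EuclideanSpace.single i.castSucc (1:ℝ)) := by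
    intro i; rw [hwapp, if_neg (Fin.castSucc_lt_last i).ne]
  have hwl : w (Fin.last n) = -(f (EuclideanSpace.single (Fin.last n) (1:ℝ))) := by
    rw [hwapp, if_pos rfl]
  have hrep : ∀ x : EuclideanSpace ℝ (Fin (n+1)), mink w x = f x := by
    intro x
    have hx : f x = ∑ i, x i * f (EuclideanSpace.single i (1:ℝ)) := by
      have hx' : x = ∑ i, x i • EuclideanSpace.single i (1:ℝ) := by
        have := (EuclideanSpace.basisFun (Fin (n+1)) ℝ).sum_repr x
        simpa [EuclideanSpace.basisFun_repr, EuclideanSpace.basisFun_apply] using this.symm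
      conv_lhs => rw [hx']
      simp [smul_eq_mul]
    rw [hx, Fin.sum_univ_castSucc]
    unfold mink
    rw [hwl]
    have hterm : ∀ i : Fin n, w i.castSucc * x i.castSucc
        = x i.castSucc * f (EuclideanSpace.single i.castSucc (1:ℝ)) := by
      intro i; rw [hwc i]; ring
    rw [Finset.sum_congr rfl fun i _ => hterm i]
    ring
  have heU : EuclideanSpace.single (Fin.last n) (1:ℝ) ∈ U := by
    constructor
    · show mink _ _ < 0
      unfold mink
      simp [EuclideanSpace.single_apply, (Fin.castSucc_lt_last _).ne]
    · show (0:ℝ) < _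
      simp [EuclideanSpace.single_apply]
  have hwlast : 0 < w (Fin.last n) := by
    rw [hwl]
    have := hfU _ heU
    linarith
  have hwne : w ≠ 0 := by
    intro h
    have : w (Fin.last n) = 0 := by rw [h]; rfl
    linarith
  refine ⟨w, hwne, ⟨?_, hwlast.le⟩, fun x hx => by rw [hrep]; exact hfK0 x hx⟩
  by_contra hpos
  push_neg at hpos
  set s : ℝ := ∑ i : Fin n, w i.castSucc * w i.castSucc with hs
  set t : ℝ := w (Fin.last n) with ht
  have hst : t * t < s := by
    have h : mink w w = s - t * t := rfl
    rw [h] at hpos; linarith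
  have hspos : 0 < s := by nlinarith [mul_self_nonneg t]
  set x : EuclideanSpace ℝ (Fin (n+1)) :=
    WithLp.toLp 2 (fun j => if j = Fin.last n then (1:ℝ) else (t/s) * w j) with hxdef
  have hxapp : ∀ j, x j = if j = Fin.last n then (1:ℝ) else (t/s) * w j := fun j => rfl
  have hxlast : x (Fin.last n) = 1 := by rw [hxapp, if_pos rfl]
  have hxc : ∀ i : Fin n, x i.castSucc = (t/s) * w i.castSucc := fun i => by
    rw [hxapp, if_neg (Fin.castSucc_lt_last i).ne]
  have hxU : x ∈ U := by
    constructor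
    · show mink x x < 0
      unfold mink
      rw [hxlast]
      have hterm : ∀ i : Fin n, x i.castSucc * x i.castSucc
          = ((t/s) * w i.castSucc) * ((t/s) * w i.castSucc) := fun i => by rw [hxc i]
      rw [Finset.sum_congr rfl fun i _ => hterm i]
      have hsum : ∑ i : Fin n, ((t/s) * w i.castSucc) * ((t/s) * w i.castSucc)
          = (t/s)^2 * s := by rw [hs, Finset.mul_sum]; exact Finset.sum_congr rfl fun i _ => by ring
      rw [hsum]
      have h1 : (t/s)^2 * s = t*t/s := by field_simp
      rw [h1]
      have h2 : t*t/s < 1 := (div_lt_one hspos).mpr (by nlinarith)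
      linarith
    · show 0 < x (Fin.last n)
      rw [hxlast]; norm_num
  have hminkwx : mink w x = 0 := by
    unfold mink
    rw [hxlast]
    have hterm : ∀ i : Fin n, w i.castSucc * x i.castSucc
        = w i.castSucc * ((t/s) * w i.castSucc) := fun i => by rw [hxc i]
    rw [Finset.sum_congr rfl fun i _ => hterm i]
    have hsum : ∑ i : Fin n, w i.castSucc * ((t/s) * w i.castSucc) = (t/s) * s := by
      rw [hs, Finset.mul_sum]; exact Finset.sum_congr rfl fun i _ => by ring
    rw [hsum, div_mul_cancel₀ _ (ne_of_gt hspos)]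
    ring
  have hcontra := hfU x hxU
  rw [← hrep x, hminkwx] at hcontra
  linarith

/-- Reflection of the last (time) coordinate. -/
noncomputable def negLast (n : ℕ) :
    EuclideanSpace ℝ (Fin (n + 1)) →ₗ[ℝ] EuclideanSpace ℝ (Fin (n + 1)) where
  toFun x := WithLp.toLp 2 (fun j => if j = Fin.last n then -(x j) else x j)
  map_add' x y := by
    ext j
    show (if j = Fin.last n then -((x + y) j) else (x + y) j) = _
    by_cases h : j = Fin.last n <;>
      simp [h, PiLp.add_apply]
    ring
  map_smul' c x := by
    ext j
    show (if j = Fin.last n then -((c • x) j) else (c • x) j) = _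
    by_cases h : j = Fin.last n
    · simp [h, PiLp.smul_apply, smul_eq_mul]
    · simp [h, PiLp.smul_apply, smul_eq_mul]

lemma negLast_apply {n : ℕ} (x : EuclideanSpace ℝ (Fin (n+1))) (j : Fin (n+1)) :
    negLast n x j = if j = Fin.last n then -(x j) else x j := rfl

lemma negLast_castSucc {n : ℕ} (x : EuclideanSpace ℝ (Fin (n+1))) (i : Fin n) :
    negLast n x i.castSucc = x i.castSucc := by
  rw [negLast_apply, if_neg (Fin.castSucc_lt_last i).ne]

lemma negLast_last {n : ℕ} (x : EuclideanSpace ℝ (Fin (n+1))) :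
    negLast n x (Fin.last n) = -(x (Fin.last n)) := by
  rw [negLast_apply, if_pos rfl]

lemma negLast_negLast {n : ℕ} (x : EuclideanSpace ℝ (Fin (n+1))) :
    negLast n (negLast n x) = x := by
  ext j
  rw [negLast_apply]
  by_cases h : j = Fin.last n
  · subst h; rw [negLast_last, if_pos rfl] at *; simp [negLast_last]
  · rw [if_neg h, negLast_apply, if_neg h]

lemma mink_negLast_negLast {n : ℕ} (x y : EuclideanSpace ℝ (Fin (n+1))) :
    mink (negLast n x) (negLast n y) = mink x y := by
  unfold mink
  simp only [negLast_castSucc, negLast_last]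
  ring

lemma mink_negLast_left {n : ℕ} (x y : EuclideanSpace ℝ (Fin (n+1))) :
    mink (negLast n x) y = mink x (negLast n y) := by
  unfold mink
  simp only [negLast_castSucc, negLast_last]
  ring

lemma mink_neg_neg {n : ℕ} (x y : EuclideanSpace ℝ (Fin (n+1))) :
    mink (-x) (-y) = mink x y := by
  unfold mink
  simp only [PiLp.neg_apply]
  ring

theorem stmt_6 (n : ℕ) (hn : 1 ≤ n)
    (K : Set (EuclideanSpace ℝ (Fin (n + 1))))
    (h0 : (0 : EuclideanSpace ℝ (Fin (n + 1))) ∈ K)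
    (hconv : Convex ℝ K)
    (hcone : ∀ c : ℝ, 0 ≤ c → ∀ x ∈ K, c • x ∈ K)
    (hspace : ∀ x ∈ K, x ≠ 0 → 0 < mink x x) :
    (∃ w, w ≠ 0 ∧ w ∈ futureCone n ∩ minkDual K) ∧
    (∃ w', w' ≠ 0 ∧ w' ∈ pastCone n ∩ minkDual K) := by
  refine ⟨key_separation K h0 hconv hcone hspace, ?_⟩
  -- apply the key lemma to the time-reflected cone
  set K' : Set (EuclideanSpace ℝ (Fin (n+1))) := negLast n '' K with hK'
  have h0' : (0 : EuclideanSpace ℝ (Fin (n + 1))) ∈ K' :=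
    ⟨0, h0, map_zero _⟩
  have hconv' : Convex ℝ K' := hconv.linear_image (negLast n)
  have hcone' : ∀ c : ℝ, 0 ≤ c → ∀ y ∈ K', c • y ∈ K' := by
    rintro c hc y ⟨x, hx, rfl⟩
    exact ⟨c • x, hcone c hc x hx, by rw [map_smul]⟩
  have hspace' : ∀ y ∈ K', y ≠ 0 → 0 < mink y y := by
    rintro y ⟨x, hx, rfl⟩ hne
    have hxne : x ≠ 0 := by
      rintro rfl; exact hne (map_zero _)
    rw [mink_negLast_negLast]
    exact hspace x hx hxne
  obtain ⟨w, hwne, hF, hdual⟩ := key_separation K' h0' hconv' hcone' hspace'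
  refine ⟨negLast n w, ?_, ?_, ?_⟩
  · intro h
    apply hwne
    have := congrArg (negLast n) h
    rwa [negLast_negLast, map_zero] at this
  · show negLast n w ∈ pastCone n
    rw [pastCone, Set.mem_neg]
    constructor
    · rw [mink_neg_neg, mink_negLast_negLast]
      exact hF.1
    · rw [PiLp.neg_apply, negLast_last]
      simpa using hF.2
  · intro x hx
    rw [mink_negLast_left]
    exact hdual (negLast n x) ⟨x, hx, rfl⟩
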